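/- Let (S, K_S) be a small site and i : S ⥤ C a fully faithful functor into a small category C. Then there exists a Grothendieck topology K on C together with an equivalence of categories between Sh(S, K_S) and Sh(C, K). Moreover, if the functor C → Sh(S, K_S) sending an object c to the K_S-sheafification of the presheaf d ↦ Hom_C(i(d), c) is fully faithful, then the topology K can be chosen to be subcanonical, i.e. every representable presheaf on C is a K-sheaf. -/

import Mathlib

open CategoryTheory CategoryTheory.Limits Opposite

universe u

namespace Statement18Aux

variable {S C : Type u} [SmallCategory S] [SmallCategory C]
variable (J : GrothendieckTopology S) (i : S ⥤ C)

/-- The topology on `C` induced by `J` along `i`: a sieve covers `c` iff its pullback along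
every morphism from the image of `i` gives a `J`-covering sieve. -/
def bigTop : GrothendieckTopology C where
  sieves c T := ∀ (u : S) (f : i.obj u ⟶ c), (T.pullback f).functorPullback i ∈ J u
  top_mem' c u f := by
    have h : ((⊤ : Sieve c).pullback f).functorPullback i = ⊤ := by
      ext v h; simp [Sieve.functorPullback]
    rw [h]; exact J.top_mem u
  pullback_stable' c c' T g hT u f := by
    rw [← Sieve.pullback_comp]
    exact hT u (f ≫ g)
  transitive' c T hT R H u f := by
    refine J.transitive (hT u f) _ ?_
    intro v h hh
    have h1 := H hh v (𝟙 (i.obj v))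
    rw [Sieve.pullback_id] at h1
    convert h1 using 1
    ext w k
    show R (i.map (k ≫ h) ≫ f) ↔ R (i.map k ≫ (i.map h ≫ f))
    rw [i.map_comp, Category.assoc]

instance : i.IsCoverDense (bigTop J i) := by
  constructor
  intro c u f
  have h : ((Sieve.coverByImage i c).pullback f).functorPullback i = ⊤ := by
    ext v h
    simp only [Sieve.top_apply, iff_true]
    exact ⟨⟨v, 𝟙 _, i.map h ≫ f, by simp⟩⟩
  rw [h]
  exact J.top_mem u

instance : i.IsCocontinuous J (bigTop J i) := by
  constructor
  intro u T hT
  have h := hT u (𝟙 _)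
  rwa [Sieve.pullback_id] at h

lemma pushforward_mem_iff [i.Full] [i.Faithful] {X : S} {T : Sieve X} :
    T.functorPushforward i ∈ bigTop J i (i.obj X) ↔ T ∈ J X := by
  constructor
  · intro h
    have h1 := h X (𝟙 _)
    rw [Sieve.pullback_id] at h1
    rwa [(Sieve.fullyFaithfulFunctorGaloisCoinsertion i X).u_l_eq T] at h1
  · intro hT u f
    obtain ⟨g, rfl⟩ := i.map_surjective f
    refine J.superset_covering ?_ (J.pullback_stable g hT)
    intro v h hh
    exact ⟨v, h ≫ g, 𝟙 _, hh, by simp⟩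

instance denseSubsite [i.Full] [i.Faithful] : i.IsDenseSubsite J (bigTop J i) where
  functorPushforward_mem_iff := pushforward_mem_iff J i

lemma yoneda_isSheaf [i.Full] [i.Faithful]
    (hF : (yoneda ⋙ (Functor.whiskeringLeft Sᵒᵖ Cᵒᵖ (Type u)).obj i.op ⋙ presheafToSheaf J (Type u)).Full)
    (hFa : (yoneda ⋙ (Functor.whiskeringLeft Sᵒᵖ Cᵒᵖ (Type u)).obj i.op ⋙
      presheafToSheaf J (Type u)).Faithful)
    (c : C) : Presheaf.IsSheaf (bigTop J i) (yoneda.obj c) := by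
  set L : C ⥤ Sheaf J (Type u) :=
    yoneda ⋙ (Functor.whiskeringLeft Sᵒᵖ Cᵒᵖ (Type u)).obj i.op ⋙ presheafToSheaf J (Type u) with hL
  let adj := i.op.ranAdjunction (Type u)
  let sadj := sheafificationAdjunction J (Type u)
  let Q : Cᵒᵖ ⥤ Type u := i.op.ran.obj ((L.obj c).val)
  let η : ((Functor.whiskeringLeft Sᵒᵖ Cᵒᵖ (Type u)).obj i.op).obj (yoneda.obj c) ⟶ (L.obj c).val :=
    sadj.unit.app (i.op ⋙ yoneda.obj c)
  let φ : yoneda.obj c ⟶ Q := (adj.homEquiv (yoneda.obj c) ((L.obj c).val)) η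
  have key : ∀ (c' : C) (g : c' ⟶ c),
      φ.app (op c') g =
        yonedaEquiv ((adj.homEquiv (yoneda.obj c') ((L.obj c).val))
          ((sadj.homEquiv (i.op ⋙ yoneda.obj c') (L.obj c)) (L.map g))) := by
    intro c' g
    have h1 : φ.app (op c') g = yonedaEquiv (yoneda.map g ≫ φ) := by
      rw [yonedaEquiv_comp, yonedaEquiv_yoneda_map]
    rw [h1]
    congr 1
    rw [← Adjunction.homEquiv_naturality_left]
    congr 1
    rw [Adjunction.homEquiv_unit]
    exact (sadj.unit.naturality (((Functor.whiskeringLeft Sᵒᵖ Cᵒᵖ (Type u)).obj i.op).map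
      (yoneda.map g)))
  have hbij : ∀ X : Cᵒᵖ, Function.Bijective (φ.app X) := by
    intro X
    have hfun : φ.app X = fun g : ((yoneda.obj c).obj X) =>
        yonedaEquiv ((adj.homEquiv (yoneda.obj X.unop) ((L.obj c).val))
          ((sadj.homEquiv (i.op ⋙ yoneda.obj X.unop) (L.obj c)) (L.map g))) :=
      funext fun g => key X.unop g
    rw [hfun]
    exact yonedaEquiv.bijective.comp ((adj.homEquiv _ _).bijective.comp
      ((sadj.homEquiv _ _).bijective.comp ⟨fun a b h => L.map_injective h, L.map_surjective⟩))
  have : ∀ X : Cᵒᵖ, IsIso (φ.app X) := fun X => (isIso_iff_bijective _).mpr (hbij X)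
  have : IsIso φ := NatIso.isIso_of_isIso_app φ
  rw [Presheaf.isSheaf_of_iso_iff (asIso φ)]
  exact ((i.sheafPushforwardCocontinuous (Type u) J (bigTop J i)).obj (L.obj c)).cond

end Statement18Aux

/-- Given a small site `(S, J)` and a fully faithful functor `i : S ⥤ C`
into a small category `C`, there is a Grothendieck topology `K` on `C` such that
`Sh(S, J) ≃ Sh(C, K)`. Moreover, if the functor `C ⥤ Sh(S, J)` sending `c` to the
`J`-sheafification of the presheaf `d ↦ Hom_C(i d, c)` is fully faithful, then `K` can be
chosen subcanonical, i.e. so that every representable presheaf on `C` is a `K`-sheaf. -/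
theorem statement18 {S C : Type u} [SmallCategory S] [SmallCategory C]
    (J : GrothendieckTopology S) (i : S ⥤ C) (hi_full : i.Full) (hi_faithful : i.Faithful) :
    (∃ K : GrothendieckTopology C, Nonempty (Sheaf J (Type u) ≌ Sheaf K (Type u))) ∧
    ((yoneda ⋙ (Functor.whiskeringLeft Sᵒᵖ Cᵒᵖ (Type u)).obj i.op ⋙ presheafToSheaf J (Type u)).Full →
     (yoneda ⋙ (Functor.whiskeringLeft Sᵒᵖ Cᵒᵖ (Type u)).obj i.op ⋙ presheafToSheaf J (Type u)).Faithful →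
     ∃ K : GrothendieckTopology C,
       Nonempty (Sheaf J (Type u) ≌ Sheaf K (Type u)) ∧
       ∀ c : C, Presheaf.IsSheaf K (yoneda.obj c)) := by
  letI : i.Full := hi_full
  letI : i.Faithful := hi_faithful
  have e : Sheaf J (Type u) ≌ Sheaf (Statement18Aux.bigTop J i) (Type u) :=
    Functor.IsDenseSubsite.sheafEquiv J (Statement18Aux.bigTop J i) i (Type u)
  refine ⟨⟨Statement18Aux.bigTop J i, ⟨e⟩⟩, fun hF hFa => ⟨Statement18Aux.bigTop J i, ⟨e⟩, fun c => Statement18Aux.yoneda_isSheaf J i hF hFa c⟩⟩
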